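/- Let n ≥ 3 and let I be a nonempty proper subset of [n] that is nested, and let S ⊆ {1,2,3,4} be the set of indices i for which δ_i is a proper diagonal. Then S is never equal to any of the following sets: ∅, {2}, {3}, {4}, {1,2}, {1,3}, {2,4}, {3,4}. -/
import Mathlib


open Finset

attribute [local instance] Classical.propDecidable

namespace AssocPaper

/-- `x` and `y` are consecutive elements of the finite set `S`. -/
def ConsecIn (S : Finset ℕ) (x y : ℕ) : Prop :=
  x ∈ S ∧ y ∈ S ∧ x < y ∧ ∀ z ∈ S, ¬ (x < z ∧ z < y)

/-- `D̄ = D ∪ {0, n+1}`. -/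
def Dbar (n : ℕ) (D : Finset ℕ) : Finset ℕ := insert 0 (insert (n + 1) D)

/-- The boundary edges of the `c`-labeled `(n+2)`-gon, given by endpoints `x < y`:
pairs of consecutive elements of `D̄`; if `U ≠ ∅` also `{0, min U}`, `{max U, n+1}` and
pairs of consecutive elements of `U`; if `U = ∅` also `{0, n+1}`. -/
def IsBoundary (n : ℕ) (D U : Finset ℕ) (x y : ℕ) : Prop :=
  ConsecIn (Dbar n D) x y
    ∨ (U.Nonempty ∧
        ((x = 0 ∧ y ∈ U ∧ ∀ u ∈ U, y ≤ u)
          ∨ (y = n + 1 ∧ x ∈ U ∧ ∀ u ∈ U, u ≤ x)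
          ∨ ConsecIn U x y))
    ∨ (U = ∅ ∧ x = 0 ∧ y = n + 1)

/-- `{x, y}` (with `x < y ≤ n+1`) is a proper diagonal: a diagonal of the
`(n+2)`-gon which is not a boundary edge. -/
def IsProper (n : ℕ) (D U : Finset ℕ) (x y : ℕ) : Prop :=
  x < y ∧ y ≤ n + 1 ∧ ¬ IsBoundary n D U x y

/-- The set `R_δ` for a proper diagonal `δ = {x,y}` with `x < y`. -/
noncomputable def Rdiag (n : ℕ) (D U : Finset ℕ) (x y : ℕ) : Finset ℕ :=
  if x ∈ U then
    (if y ∈ U then (D ∪ U.filter fun u => u ≤ x) ∪ U.filter fun u => y ≤ u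
     else D.filter (fun d => d < y) ∪ U.filter fun u => u ≤ x)
  else
    (if y ∈ U then D.filter (fun d => x < d) ∪ U.filter fun u => y ≤ u
     else D.filter fun d => x < d ∧ d < y)

/-- The extension of `R` to non-proper and degenerate diagonals `δ = {x,y}`, `x ≤ y`:
`R_δ = [n]` if `U = ∅` and `δ = {0,n+1}`; for other non-proper or degenerate `δ`,
`R_δ = ∅` if `x,y ∈ D̄` and `R_δ = [n]` otherwise. -/
noncomputable def Rext (n : ℕ) (D U : Finset ℕ) (x y : ℕ) : Finset ℕ :=
  if IsProper n D U x y then Rdiag n D U x y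
  else if U = ∅ ∧ x = 0 ∧ y = n + 1 then Finset.Icc 1 n
  else if x ∈ U ∨ y ∈ U then Finset.Icc 1 n
  else ∅

/-- The extension of the right-hand sides `z_{R_δ}` to non-proper and degenerate
diagonals, given the values `w` on proper diagonals and the value `zn = z_{[n]}`. -/
noncomputable def zext (n : ℕ) (D U : Finset ℕ) (w : ℕ × ℕ → ℝ) (zn : ℝ) (x y : ℕ) : ℝ :=
  if IsProper n D U x y then w (x, y)
  else if U = ∅ ∧ x = 0 ∧ y = n + 1 then zn
  else if x ∈ U ∨ y ∈ U then zn
  else 0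

/-- `a(I)`: the largest element of `D ∪ {0}` smaller than `min I`. -/
noncomputable def aI (D I : Finset ℕ) : ℕ :=
  ((insert 0 D).filter fun e => ∀ i ∈ I, e < i).sup id

/-- `b(I)`: the smallest element of `D ∪ {n+1}` larger than `max I`. -/
noncomputable def bI (n : ℕ) (D I : Finset ℕ) : ℕ :=
  sInf {e : ℕ | e ∈ insert (n + 1) D ∧ ∀ i ∈ I, i < e}

/-- The minimum element `γ` of `I` (junk value for `I = ∅`). -/
noncomputable def minEl (I : Finset ℕ) : ℕ := sInf {i : ℕ | i ∈ I}

/-- The maximum element `Γ` of `I` (junk value `0` for `I = ∅`). -/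
noncomputable def maxEl (I : Finset ℕ) : ℕ := I.sup id

/-- A nonempty `I ⊆ [n]` is nested if every `d ∈ D` with `a(I) < d < b(I)` lies in `I`. -/
def IsNested (n : ℕ) (D I : Finset ℕ) : Prop :=
  I.Nonempty ∧ I ⊆ Finset.Icc 1 n ∧
    ∀ d ∈ D, aI D I < d → d < bI n D I → d ∈ I

/-- The nested components of `I`: the inclusion-maximal nested subsets of `I`. -/
noncomputable def nestedComponents (n : ℕ) (D I : Finset ℕ) : Finset (Finset ℕ) :=
  I.powerset.filter fun J =>
    IsNested n D J ∧ ∀ K ∈ I.powerset, IsNested n D K → J ⊆ K → J = K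

/-- `v(I)`: the number of nested components of `I`. -/
noncomputable def vI (n : ℕ) (D I : Finset ℕ) : ℕ := (nestedComponents n D I).card

/-- `x` is the last element of one of the up intervals of `J`
(an element of `J ∩ U` whose successor in `U`, if any, is not in `J`). -/
def IsRunEnd (U J : Finset ℕ) (x : ℕ) : Prop :=
  x ∈ J ∧ x ∈ U ∧ ∀ y, ConsecIn U x y → y ∉ J

/-- `y` is the first element of one of the up intervals of `J`
(an element of `J ∩ U` whose predecessor in `U`, if any, is not in `J`). -/
def IsRunStart (U J : Finset ℕ) (y : ℕ) : Prop :=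
  y ∈ J ∧ y ∈ U ∧ ∀ x, ConsecIn U x y → x ∉ J

/-- `{x,y}` is one of the diagonals `δ_1(J), …, δ_{w+1}(J)` associated to a nested
set `J` with `a = a(J)`, `b = b(J)` and up intervals `[α_1,β_1]_U, …, [α_w,β_w]_U`,
namely `{a,α_1}, {β_1,α_2}, …, {β_w,b}` (and `{a,b}` when `w = 0`). -/
def AssocDiag (n : ℕ) (D U J : Finset ℕ) (x y : ℕ) : Prop :=
  x < y ∧ (x = aI D J ∨ IsRunEnd U J x) ∧ (y = bI n D J ∨ IsRunStart U J y) ∧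
    ∀ u ∈ J ∩ U, ¬ (x < u ∧ u < y)

/-- `W(J)`: the proper diagonals among the diagonals associated to the nested set `J`. -/
noncomputable def WJ (n : ℕ) (D U J : Finset ℕ) : Finset (ℕ × ℕ) :=
  (Finset.range (n + 2) ×ˢ Finset.range (n + 2)).filter fun p =>
    AssocDiag n D U J p.1 p.2 ∧ IsProper n D U p.1 p.2

/-- The tight value `z^c_I = ∑_i ( ∑_{j ∈ W(J_i)} w_{δ_j(J_i)} − (|W(J_i)|−1)·z_{[n]} )`,
the sum running over the nested components `J_i` of `I` (so `z^c_∅ = 0`). -/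
noncomputable def zc (n : ℕ) (D U : Finset ℕ) (w : ℕ × ℕ → ℝ) (zn : ℝ) (I : Finset ℕ) : ℝ :=
  ∑ J ∈ nestedComponents n D I,
    ((∑ p ∈ WJ n D U J, w p) - (((WJ n D U J).card : ℝ) - 1) * zn)

/-- The Minkowski coefficient `y_I = ∑_{J ⊆ I} (−1)^{|I∖J|} z^c_J`. -/
noncomputable def yI (n : ℕ) (D U : Finset ℕ) (w : ℕ × ℕ → ℝ) (zn : ℝ) (I : Finset ℕ) : ℝ :=
  ∑ J ∈ I.powerset, (-1 : ℝ) ^ (I \ J).card * zc n D U w zn J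

/-- The associahedron right-hand sides `w_δ = |R_δ|·(|R_δ|+1)/2`. -/
noncomputable def wAs (n : ℕ) (D U : Finset ℕ) (p : ℕ × ℕ) : ℝ :=
  (((Rdiag n D U p.1 p.2).card : ℝ) * (((Rdiag n D U p.1 p.2).card : ℝ) + 1)) / 2

/-- The associahedron value `z_{[n]} = n(n+1)/2`. -/
noncomputable def znAs (n : ℕ) : ℝ := ((n : ℝ) * ((n : ℝ) + 1)) / 2


lemma minEl_mem {I : Finset ℕ} (h : I.Nonempty) : minEl I ∈ I := by
  have hne : {i : ℕ | i ∈ I}.Nonempty := ⟨h.choose, h.choose_spec⟩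
  exact Nat.sInf_mem hne

lemma minEl_le {I : Finset ℕ} {i : ℕ} (hi : i ∈ I) : minEl I ≤ i := Nat.sInf_le hi

lemma maxEl_mem {I : Finset ℕ} (h : I.Nonempty) : maxEl I ∈ I := by
  obtain ⟨e, he, heq⟩ := Finset.exists_mem_eq_sup I h id
  rw [maxEl, heq]; exact he

lemma le_maxEl {I : Finset ℕ} {i : ℕ} (hi : i ∈ I) : i ≤ maxEl I :=
  Finset.le_sup (f := id) hi

lemma aI_mem_spec {D I : Finset ℕ} (hpos : ∀ i ∈ I, 0 < i) :
    aI D I ∈ insert 0 D ∧ ∀ i ∈ I, aI D I < i := by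
  have h0 : (0 : ℕ) ∈ (insert 0 D).filter fun e => ∀ i ∈ I, e < i :=
    Finset.mem_filter.mpr ⟨Finset.mem_insert_self _ _, fun i hi => hpos i hi⟩
  obtain ⟨e, he, heq⟩ := Finset.exists_mem_eq_sup _ ⟨0, h0⟩ id
  rw [aI, heq]
  exact Finset.mem_filter.mp he

lemma le_aI {D I : Finset ℕ} {e : ℕ} (he : e ∈ insert 0 D) (h : ∀ i ∈ I, e < i) :
    e ≤ aI D I := Finset.le_sup (f := id) (Finset.mem_filter.mpr ⟨he, h⟩)

lemma bI_mem_spec {n : ℕ} {D I : Finset ℕ} (hub : ∀ i ∈ I, i ≤ n) :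
    bI n D I ∈ insert (n + 1) D ∧ ∀ i ∈ I, i < bI n D I := by
  have hmem : (n + 1) ∈ {e : ℕ | e ∈ insert (n + 1) D ∧ ∀ i ∈ I, i < e} :=
    ⟨Finset.mem_insert_self _ _, fun i hi => Nat.lt_succ_of_le (hub i hi)⟩
  exact Nat.sInf_mem ⟨n + 1, hmem⟩

lemma bI_le {n : ℕ} {D I : Finset ℕ} {e : ℕ} (he : e ∈ insert (n + 1) D)
    (h : ∀ i ∈ I, i < e) : bI n D I ≤ e := Nat.sInf_le ⟨he, h⟩

/-- for `n ≥ 3` and a nonempty proper nested `I ⊆ [n]`, the set `S` of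
indices `i ∈ {1,2,3,4}` with `δ_i` proper is never `∅`, `{2}`, `{3}`, `{4}`,
`{1,2}`, `{1,3}`, `{2,4}` or `{3,4}`. -/
theorem statement9 (n : ℕ) (D U : Finset ℕ) (hn : 3 ≤ n)
    (hDU : D ∪ U = Finset.Icc 1 n) (hdisj : Disjoint D U) (h1D : 1 ∈ D) (hnD : n ∈ D)
    (I : Finset ℕ) (hne : I.Nonempty) (hsub : I ⊆ Finset.Icc 1 n)
    (hpropersub : I ≠ Finset.Icc 1 n) (hnested : IsNested n D I)
    (S : Finset ℕ)
    (hS : ∀ i : ℕ, i ∈ S ↔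
        ((i = 1 ∧ IsProper n D U (aI D I) (bI n D I)) ∨
         (i = 2 ∧ IsProper n D U (aI D I) (maxEl I)) ∨
         (i = 3 ∧ IsProper n D U (minEl I) (bI n D I)) ∨
         (i = 4 ∧ IsProper n D U (minEl I) (maxEl I)))) :
    S ≠ ∅ ∧ S ≠ {2} ∧ S ≠ {3} ∧ S ≠ {4} ∧
      S ≠ {1, 2} ∧ S ≠ {1, 3} ∧ S ≠ {2, 4} ∧ S ≠ {3, 4} := by
  obtain ⟨-, -, hnst⟩ := hnested
  have hIcc : ∀ i ∈ I, 1 ≤ i ∧ i ≤ n := fun i hi => Finset.mem_Icc.mp (hsub hi)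
  have hγI : minEl I ∈ I := minEl_mem hne
  have hΓI : maxEl I ∈ I := maxEl_mem hne
  obtain ⟨haD, haI⟩ := aI_mem_spec (D := D) (I := I) (fun i hi => (hIcc i hi).1)
  obtain ⟨hbD, hbI⟩ := bI_mem_spec (n := n) (D := D) (I := I) (fun i hi => (hIcc i hi).2)
  set a := aI D I with haDef
  set b := bI n D I with hbDef
  set γ := minEl I with hγDef
  set Γ := maxEl I with hΓDef
  have hγle : ∀ i ∈ I, γ ≤ i := fun i hi => minEl_le hi
  have hΓge : ∀ i ∈ I, i ≤ Γ := fun i hi => le_maxEl hi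
  have hγΓ : γ ≤ Γ := hΓge γ hγI
  have haγ : a < γ := haI _ hγI
  have hΓb : Γ < b := hbI _ hΓI
  have hγ1 : 1 ≤ γ := (hIcc _ hγI).1
  have hΓn : Γ ≤ n := (hIcc _ hΓI).2
  have hbn1 : b ≤ n + 1 :=
    bI_le (Finset.mem_insert_self _ _) (fun i hi => Nat.lt_succ_of_le (hIcc i hi).2)
  have hUIcc : ∀ u ∈ U, 1 ≤ u ∧ u ≤ n := by
    intro u hu
    have : u ∈ D ∪ U := Finset.mem_union_right _ hu
    rw [hDU] at this
    exact Finset.mem_Icc.mp this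
  have hU0 : (0 : ℕ) ∉ U := fun h => by have := (hUIcc 0 h).1; omega
  have hUn1 : (n + 1) ∉ U := fun h => by have := (hUIcc _ h).2; omega
  have hDnotU : ∀ x ∈ D, x ∉ U := fun x hx => Finset.disjoint_left.mp hdisj hx
  have haU : a ∉ U := by
    rcases Finset.mem_insert.mp haD with h | h
    · rw [h]; exact hU0
    · exact hDnotU _ h
  have hbU : b ∉ U := by
    rcases Finset.mem_insert.mp hbD with h | h
    · rw [h]; exact hUn1
    · exact hDnotU _ h
  have hDbar : ∀ d ∈ D, d ∈ Dbar n D := fun d hd =>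
    Finset.mem_insert_of_mem (Finset.mem_insert_of_mem hd)
  have haDbar : a ∈ Dbar n D := by
    rcases Finset.mem_insert.mp haD with h | h
    · rw [h]; exact Finset.mem_insert_self _ _
    · exact hDbar _ h
  have hbDbar : b ∈ Dbar n D := by
    rcases Finset.mem_insert.mp hbD with h | h
    · rw [h]; exact Finset.mem_insert_of_mem (Finset.mem_insert_self _ _)
    · exact hDbar _ h
  have hUnotDbar : ∀ y ∈ U, y ∉ Dbar n D := by
    intro y hy hmem
    have h1 := (hUIcc y hy).1
    have h2 := (hUIcc y hy).2
    rcases Finset.mem_insert.mp hmem with h | hmem2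
    · omega
    rcases Finset.mem_insert.mp hmem2 with h | hD
    · omega
    · exact hDnotU _ hD hy
  -- refuting `ConsecIn (Dbar n D)` given an interior witness in `D`
  have hnotcons : ∀ x y w : ℕ, w ∈ D → x < w → w < y → ¬ ConsecIn (Dbar n D) x y := by
    rintro x y w hw hxw hwy ⟨-, -, -, hc⟩
    exact hc w (hDbar w hw) ⟨hxw, hwy⟩
  -- a generic way to prove properness when both endpoints avoid `U`
  have hIsProper_of : ∀ x y : ℕ, x ∉ U → y ∉ U → x < y → y ≤ n + 1 →
      ¬ ConsecIn (Dbar n D) x y → ¬ (U = ∅ ∧ x = 0 ∧ y = n + 1) →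
      IsProper n D U x y := by
    intro x y hxU hyU hxy hyn hcons hlast
    refine ⟨hxy, hyn, ?_⟩
    rintro (h | ⟨hUne, (⟨hx0, hyU', -⟩ | ⟨hyn', hxU', -⟩ | ⟨hxU', -, -, -⟩)⟩ | h)
    · exact hcons h
    · exact hyU hyU'
    · exact hxU hxU'
    · exact hxU hxU'
    · exact hlast h
  -- membership translations
  have h1S : (1 : ℕ) ∈ S ↔ IsProper n D U a b := by rw [hS]; norm_num
  have h2S : (2 : ℕ) ∈ S ↔ IsProper n D U a Γ := by rw [hS]; norm_num
  have h3S : (3 : ℕ) ∈ S ↔ IsProper n D U γ b := by rw [hS]; norm_num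
  have h4S : (4 : ℕ) ∈ S ↔ IsProper n D U γ Γ := by rw [hS]; norm_num
  have hγDU : γ ∈ D ∨ γ ∈ U := by
    have : γ ∈ D ∪ U := by rw [hDU]; exact hsub hγI
    exact Finset.mem_union.mp this
  have hΓDU : Γ ∈ D ∨ Γ ∈ U := by
    have : Γ ∈ D ∪ U := by rw [hDU]; exact hsub hΓI
    exact Finset.mem_union.mp this
  -- the key structural fact
  have key : ((1 : ℕ) ∈ S ∧ ((2 : ℕ) ∈ S ↔ (3 : ℕ) ∈ S)) ∨
      ((1 : ℕ) ∈ S ∧ (4 : ℕ) ∈ S) ∨ ((2 : ℕ) ∈ S ∧ (3 : ℕ) ∈ S) := by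
    rcases hγDU with hγD | hγU
    · rcases hΓDU with hΓD | hΓU
      · -- Case γ ∈ D, Γ ∈ D
        left
        have h1 : (1 : ℕ) ∈ S := by
          apply h1S.mpr
          apply hIsProper_of a b haU hbU (by omega) hbn1 (hnotcons a b γ hγD haγ (by omega))
          rintro ⟨hUe, ha0, hbn⟩
          apply hpropersub
          apply Finset.Subset.antisymm hsub
          intro x hx
          have hx' := Finset.mem_Icc.mp hx
          have hxD : x ∈ D := by
            have : x ∈ D ∪ U := by rw [hDU]; exact hx
            rcases Finset.mem_union.mp this with h | h
            · exact h
            · rw [hUe] at h; simp at h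
          exact hnst x hxD (by omega) (by omega)
        refine ⟨h1, ?_⟩
        rcases eq_or_lt_of_le hγΓ with heq | hlt
        · -- γ = Γ : both δ₂, δ₃ are boundary
          have hcons2 : ConsecIn (Dbar n D) a Γ := by
            refine ⟨haDbar, heq ▸ hDbar γ hγD, by omega, ?_⟩
            rintro z hz ⟨hz1, hz2⟩
            rcases Finset.mem_insert.mp hz with h | hz'
            · omega
            rcases Finset.mem_insert.mp hz' with h | hzD
            · omega
            · have : z ≤ a := le_aI (Finset.mem_insert_of_mem hzD)
                (fun i hi => by have := hγle i hi; omega)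
              omega
          have hcons3 : ConsecIn (Dbar n D) γ b := by
            refine ⟨hDbar γ hγD, hbDbar, by omega, ?_⟩
            rintro z hz ⟨hz1, hz2⟩
            rcases Finset.mem_insert.mp hz with h | hz'
            · omega
            rcases Finset.mem_insert.mp hz' with h | hzD
            · omega
            · have : b ≤ z := bI_le (Finset.mem_insert_of_mem hzD)
                (fun i hi => by have := hΓge i hi; omega)
              omega
          constructor
          · intro h2
            exact absurd (Or.inl hcons2) (h2S.mp h2).2.2
          · intro h3
            exact absurd (Or.inl hcons3) (h3S.mp h3).2.2
        · -- γ < Γ : both δ₂, δ₃ are proper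
          have h2 : (2 : ℕ) ∈ S := by
            apply h2S.mpr
            apply hIsProper_of a Γ haU (hDnotU _ hΓD) (by omega) (by omega)
              (hnotcons a Γ γ hγD haγ hlt)
            rintro ⟨-, -, h⟩; omega
          have h3 : (3 : ℕ) ∈ S := by
            apply h3S.mpr
            apply hIsProper_of γ b (hDnotU _ hγD) hbU (by omega) hbn1
              (hnotcons γ b Γ hΓD hlt hΓb)
            rintro ⟨-, h, -⟩; omega
          exact ⟨fun _ => h3, fun _ => h2⟩
      · -- Case γ ∈ D, Γ ∈ U
        right; left
        have hγΓ' : γ < Γ := by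
          rcases eq_or_lt_of_le hγΓ with heq | hlt
          · exact absurd (heq ▸ hΓU) (hDnotU _ hγD)
          · exact hlt
        have hUne : U.Nonempty := ⟨Γ, hΓU⟩
        have h1 : (1 : ℕ) ∈ S := by
          apply h1S.mpr
          apply hIsProper_of a b haU hbU (by omega) hbn1 (hnotcons a b γ hγD haγ (by omega))
          rintro ⟨hUe, -, -⟩; rw [hUe] at hΓU; simp at hΓU
        have h4 : (4 : ℕ) ∈ S := by
          apply h4S.mpr
          refine ⟨hγΓ', by omega, ?_⟩
          rintro (⟨-, hΓb', -, -⟩ | ⟨-, (⟨h0, -, -⟩ | ⟨hn1, -, -⟩ | ⟨hγU', -, -, -⟩)⟩ |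
            ⟨hUe, -, -⟩)
          · exact hUnotDbar Γ hΓU hΓb'
          · omega
          · omega
          · exact hDnotU _ hγD hγU'
          · rw [hUe] at hΓU; simp at hΓU
        exact ⟨h1, h4⟩
    · rcases hΓDU with hΓD | hΓU
      · -- Case γ ∈ U, Γ ∈ D
        right; left
        have hγΓ' : γ < Γ := by
          rcases eq_or_lt_of_le hγΓ with heq | hlt
          · exact absurd (heq ▸ hΓD) (fun h => hDnotU _ h hγU)
          · exact hlt
        have h1 : (1 : ℕ) ∈ S := by
          apply h1S.mpr
          apply hIsProper_of a b haU hbU (by omega) hbn1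
            (hnotcons a b Γ hΓD (by omega) hΓb)
          rintro ⟨hUe, -, -⟩; rw [hUe] at hγU; simp at hγU
        have h4 : (4 : ℕ) ∈ S := by
          apply h4S.mpr
          refine ⟨hγΓ', by omega, ?_⟩
          rintro (⟨hγb', -, -, -⟩ | ⟨-, (⟨-, hΓU', -⟩ | ⟨hn1, -, -⟩ | ⟨-, hΓU', -, -⟩)⟩ |
            ⟨hUe, -, -⟩)
          · exact hUnotDbar γ hγU hγb'
          · exact hDnotU _ hΓD hΓU'
          · omega
          · exact hDnotU _ hΓD hΓU'
          · rw [hUe] at hγU; simp at hγU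
        exact ⟨h1, h4⟩
      · -- Case γ ∈ U, Γ ∈ U
        right; right
        have hγ2 : 2 ≤ γ := by
          have hne1 : γ ≠ 1 := fun h => hDnotU 1 h1D (h ▸ hγU)
          omega
        have hΓn' : Γ < n := by
          rcases eq_or_lt_of_le hΓn with heq | hlt
          · exact absurd (heq ▸ hnD) (fun hh => hDnotU _ hh hΓU)
          · exact hlt
        have ha1 : 1 ≤ a := le_aI (Finset.mem_insert_of_mem h1D)
          (fun i hi => by have := hγle i hi; omega)
        have hbn : b ≤ n := bI_le (Finset.mem_insert_of_mem hnD)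
          (fun i hi => by have := hΓge i hi; omega)
        have h2 : (2 : ℕ) ∈ S := by
          apply h2S.mpr
          refine ⟨by omega, by omega, ?_⟩
          rintro (⟨-, hΓb', -, -⟩ | ⟨-, (⟨h0, -, -⟩ | ⟨hn1, -, -⟩ | ⟨haU', -, -, -⟩)⟩ |
            ⟨-, -, hn1⟩)
          · exact hUnotDbar Γ hΓU hΓb'
          · omega
          · omega
          · exact haU haU'
          · omega
        have h3 : (3 : ℕ) ∈ S := by
          apply h3S.mpr
          refine ⟨by omega, hbn1, ?_⟩
          rintro (⟨hγb', -, -, -⟩ | ⟨-, (⟨h0, -, -⟩ | ⟨hn1, -, -⟩ | ⟨-, hbU', -, -⟩)⟩ |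
            ⟨-, h0, -⟩)
          · exact hUnotDbar γ hγU hγb'
          · omega
          · omega
          · exact hbU hbU'
          · omega
        exact ⟨h2, h3⟩
  -- conclude
  clear hS hnst
  refine ⟨?_, ?_, ?_, ?_, ?_, ?_, ?_, ?_⟩ <;>
    · intro hEq
      rw [hEq] at key
      simp at key

end AssocPaper
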